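/- Let γ : [a,b] → ℂ be continuously differentiable with |γ'(t)| ≤ L on [a,b], and suppose L·(b−a) < |γ(a)| + |γ(b)|. Let ℓ : [a,b] → ℂ be the affine parametrization of the segment from γ(a) to γ(b), i.e. ℓ(t) = γ(a) + ((t−a)/(b−a))·(γ(b)−γ(a)). Then for every t ∈ [a,b] and every λ ∈ [0,1], the convex combination (1−λ)·γ(t) + λ·ℓ(t) is nonzero. In particular, γ and ℓ are homotopic in ℂ \ {0} relative to their (common) endpoints. -/

import Mathlib

open Set

theorem stmt_1 (a b L : ℝ) (γ γ' ℓ : ℝ → ℂ)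
    (hab : a < b) (hL : 0 ≤ L)
    (hderiv : ∀ t ∈ Icc a b, HasDerivWithinAt γ (γ' t) (Icc a b) t)
    (hcont : ContinuousOn γ' (Icc a b))
    (hbound : ∀ t ∈ Icc a b, ‖γ' t‖ ≤ L)
    (hcond : L * (b - a) < ‖γ a‖ + ‖γ b‖)
    (hℓ : ∀ t : ℝ, ℓ t = γ a + (((t - a) / (b - a) : ℝ) : ℂ) * (γ b - γ a)) :
    (∀ t ∈ Icc a b, ∀ l ∈ Icc (0:ℝ) 1,
        ((1 - l : ℝ) : ℂ) * γ t + (l : ℂ) * ℓ t ≠ 0) ∧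
    ∃ H : ℝ × ℝ → ℂ, ContinuousOn H (Icc (0:ℝ) 1 ×ˢ Icc a b) ∧
      (∀ t ∈ Icc a b, H (0, t) = γ t) ∧
      (∀ t ∈ Icc a b, H (1, t) = ℓ t) ∧
      (∀ l ∈ Icc (0:ℝ) 1, H (l, a) = γ a ∧ H (l, b) = γ b) ∧
      (∀ p ∈ Icc (0:ℝ) 1 ×ˢ Icc a b, H p ≠ 0) := by
  have hba : (0:ℝ) < b - a := by linarith
  have hmvt : ∀ s ∈ Icc a b, ∀ t ∈ Icc a b, ‖γ t - γ s‖ ≤ L * |t - s| := by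
    intro s hs t ht
    have := (convex_Icc a b).norm_image_sub_le_of_norm_hasDerivWithin_le
      hderiv hbound hs ht
    simpa [Real.norm_eq_abs] using this
  -- bounds for γ t
  have hγa : ∀ t ∈ Icc a b, ‖γ t - γ a‖ ≤ L * (t - a) := by
    intro t ht
    have := hmvt a (left_mem_Icc.2 hab.le) t ht
    rwa [abs_of_nonneg (by linarith [ht.1])] at this
  have hγb : ∀ t ∈ Icc a b, ‖γ t - γ b‖ ≤ L * (b - t) := by
    intro t ht
    have := hmvt b (right_mem_Icc.2 hab.le) t ht
    rwa [abs_sub_comm, abs_of_nonneg (by linarith [ht.2])] at this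
  have hAB : ‖γ b - γ a‖ ≤ L * (b - a) := by
    simpa using hγa b (right_mem_Icc.2 hab.le)
  -- bounds for ℓ t
  have hℓa : ∀ t ∈ Icc a b, ‖ℓ t - γ a‖ ≤ L * (t - a) := by
    intro t ht
    rw [hℓ t]
    have h1 : (0:ℝ) ≤ (t - a) / (b - a) := div_nonneg (by linarith [ht.1]) hba.le
    calc ‖γ a + (((t - a) / (b - a) : ℝ) : ℂ) * (γ b - γ a) - γ a‖
        = ((t - a) / (b - a)) * ‖γ b - γ a‖ := by
          rw [add_sub_cancel_left, norm_mul, Complex.norm_real, Real.norm_eq_abs,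
            abs_of_nonneg h1]
      _ ≤ ((t - a) / (b - a)) * (L * (b - a)) := by
          exact mul_le_mul_of_nonneg_left hAB h1
      _ = L * (t - a) := by field_simp
  have hℓb : ∀ t ∈ Icc a b, ‖ℓ t - γ b‖ ≤ L * (b - t) := by
    intro t ht
    rw [hℓ t]
    have key : γ a + (((t - a) / (b - a) : ℝ) : ℂ) * (γ b - γ a) - γ b
        = (((t - b) / (b - a) : ℝ) : ℂ) * (γ b - γ a) := by
      have hr : ((t - b) / (b - a) : ℝ) = (t - a) / (b - a) - 1 := by
        field_simp; ring
      rw [hr]; push_cast; ring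
    rw [key]
    have h1 : |(t - b) / (b - a)| = (b - t) / (b - a) := by
      rw [abs_div, abs_of_pos hba, abs_sub_comm, abs_of_nonneg (by linarith [ht.2])]
    calc ‖(((t - b) / (b - a) : ℝ) : ℂ) * (γ b - γ a)‖
        = ((b - t) / (b - a)) * ‖γ b - γ a‖ := by
          rw [norm_mul, Complex.norm_real, Real.norm_eq_abs, h1]
      _ ≤ ((b - t) / (b - a)) * (L * (b - a)) := by
          exact mul_le_mul_of_nonneg_left hAB (div_nonneg (by linarith [ht.2]) hba.le)
      _ = L * (b - t) := by field_simp
  -- main nonvanishing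
  have hne : ∀ t ∈ Icc a b, ∀ l ∈ Icc (0:ℝ) 1,
      ((1 - l : ℝ) : ℂ) * γ t + (l : ℂ) * ℓ t ≠ 0 := by
    intro t ht l hl hz
    set z : ℂ := ((1 - l : ℝ) : ℂ) * γ t + (l : ℂ) * ℓ t with hzdef
    have hl0 : (0:ℝ) ≤ l := hl.1
    have hl1 : (0:ℝ) ≤ 1 - l := by linarith [hl.2]
    have hza : ‖z - γ a‖ ≤ L * (t - a) := by
      have : z - γ a = ((1 - l : ℝ) : ℂ) * (γ t - γ a) + (l : ℂ) * (ℓ t - γ a) := by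
        rw [hzdef]; push_cast; ring
      rw [this]
      calc ‖((1 - l : ℝ) : ℂ) * (γ t - γ a) + (l : ℂ) * (ℓ t - γ a)‖
          ≤ (1 - l) * ‖γ t - γ a‖ + l * ‖ℓ t - γ a‖ := by
            refine (norm_add_le _ _).trans ?_
            rw [norm_mul, norm_mul, Complex.norm_real, Complex.norm_real,
              Real.norm_eq_abs, Real.norm_eq_abs, abs_of_nonneg hl0, abs_of_nonneg hl1]
        _ ≤ (1 - l) * (L * (t - a)) + l * (L * (t - a)) := by
            gcongr <;> [exact hγa t ht; exact hℓa t ht]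
        _ = L * (t - a) := by ring
    have hzb : ‖z - γ b‖ ≤ L * (b - t) := by
      have : z - γ b = ((1 - l : ℝ) : ℂ) * (γ t - γ b) + (l : ℂ) * (ℓ t - γ b) := by
        rw [hzdef]; push_cast; ring
      rw [this]
      calc ‖((1 - l : ℝ) : ℂ) * (γ t - γ b) + (l : ℂ) * (ℓ t - γ b)‖
          ≤ (1 - l) * ‖γ t - γ b‖ + l * ‖ℓ t - γ b‖ := by
            refine (norm_add_le _ _).trans ?_
            rw [norm_mul, norm_mul, Complex.norm_real, Complex.norm_real,
              Real.norm_eq_abs, Real.norm_eq_abs, abs_of_nonneg hl0, abs_of_nonneg hl1]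
        _ ≤ (1 - l) * (L * (b - t)) + l * (L * (b - t)) := by
            gcongr <;> [exact hγb t ht; exact hℓb t ht]
        _ = L * (b - t) := by ring
    rw [hz] at hza hzb
    simp only [zero_sub, norm_neg] at hza hzb
    linarith
  refine ⟨hne, ⟨fun p => ((1 - p.1 : ℝ) : ℂ) * γ p.2 + (p.1 : ℂ) * ℓ p.2, ?_, ?_, ?_, ?_, ?_⟩⟩
  · -- continuity
    have hγc : ContinuousOn γ (Icc a b) := fun t ht =>
      (hderiv t ht).continuousWithinAt
    have hℓc : Continuous ℓ := by
      have : Continuous fun t : ℝ => γ a + (((t - a) / (b - a) : ℝ) : ℂ) * (γ b - γ a) := by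
        continuity
      simpa [funext hℓ] using this
    apply ContinuousOn.add
    · exact (Complex.continuous_ofReal.comp (continuous_const.sub continuous_fst)).continuousOn.mul
        (hγc.comp continuous_snd.continuousOn (fun p hp => hp.2))
    · exact (Complex.continuous_ofReal.comp continuous_fst).continuousOn.mul
        (hℓc.comp continuous_snd).continuousOn
  · intro t ht; simp
  · intro t ht; simp
  · intro l hl
    have ha : ℓ a = γ a := by rw [hℓ]; simp
    have hb : ℓ b = γ b := by
      rw [hℓ]; rw [div_self hba.ne']; push_cast; ring
    exact ⟨by simp only [ha]; push_cast; ring, by simp only [hb]; push_cast; ring⟩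
  · intro p hp; exact hne p.2 hp.2 p.1 hp.1
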